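/- arXiv:1907.09113 — 2 statements merged into one kernel-verified Lean document; each statement's English description precedes it below -/
import Mathlib

section
/- If a preference aggregation rule F is unanimous, then the graph aggregation rule F' (restricted to justifiable profiles) corresponding to the mechanism C_F^{VAF} with fixed VAF selection S is unanimous: for every justifiable profile AF = ⟨AF_1, …, AF_n⟩ and every pair of arguments a, b, if a →_i b for every agent i, then a → b ∈ F'(AF). -/
/-- An audience is a strict linear order on values: irreflexive, transitive and
complete (any two distinct values are comparable). -/
def IsAudience {V : Type} (P : V → V → Prop) : Prop :=
  (∀ v, ¬ P v v) ∧ (∀ u v w, P u v → P v w → P u w) ∧ (∀ v w, v ≠ w → P v w ∨ P w v)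

/-- Given a VAF with attack relation `att` and value labelling `val`, and an audience `P`,
argument `a` defeats `b` iff `a` attacks `b` and `val b` is not preferred to `val a`.
`defeats att val P` is the defeat graph induced by `P`. -/
def defeats {A V : Type} (att : A → A → Prop) (val : A → V) (P : V → V → Prop) :
    A → A → Prop :=
  fun a b => att a b ∧ ¬ P (val b) (val a)

/-- A profile of argumentation frameworks on `A` is justifiable (with values in `V`)
if there is a single VAF such that every member of the profile is a defeat graph of
that VAF induced by some audience. -/
def JustifiableProfile {A V : Type} {n : ℕ} (AF : Fin n → A → A → Prop) : Prop :=
  ∃ (att : A → A → Prop) (val : A → V),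
    ∀ i, ∃ P : V → V → Prop, IsAudience P ∧ AF i = defeats att val P

/-- if the preference aggregation rule `F` is unanimous, then the graph
aggregation rule `F'` corresponding to the mechanism `C_F^VAF` with fixed VAF
selection is unanimous on justifiable profiles. -/
theorem mechanism_with_fixed_vaf_preserves_unanimity
    (A V : Type) (n : ℕ)
    (F : (Fin n → V → V → Prop) → (V → V → Prop))
    (hF : ∀ P : Fin n → V → V → Prop, (∀ i, IsAudience (P i)) → IsAudience (F P))
    -- the VAF selection `S`: it assigns to each justifiable profile a VAF
    -- `⟨A, Satt AF, V, Sval AF⟩` justifying it, together with a selected profile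
    -- `Jsel AF` of audiences justifying the profile with respect to that VAF
    (Satt : (Fin n → A → A → Prop) → (A → A → Prop))
    (Sval : (Fin n → A → A → Prop) → (A → V))
    (Jsel : (Fin n → A → A → Prop) → (Fin n → V → V → Prop))
    (hS : ∀ AF : Fin n → A → A → Prop, JustifiableProfile (V := V) AF →
      (∀ i, IsAudience (Jsel AF i)) ∧
      (∀ i, AF i = defeats (Satt AF) (Sval AF) (Jsel AF i)))
    -- `F'` is the graph aggregation rule corresponding to the mechanism `C_F^VAF`:
    -- on justifiable profiles it outputs the defeat graph of the selected VAF
    -- induced by `F` applied to the selected justifying audiences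
    (F' : (Fin n → A → A → Prop) → (A → A → Prop))
    (hF' : ∀ AF : Fin n → A → A → Prop, JustifiableProfile (V := V) AF →
      F' AF = defeats (Satt AF) (Sval AF) (F (Jsel AF)))
    (hUnanimous : ∀ P : Fin n → V → V → Prop, (∀ i, IsAudience (P i)) →
      ∀ v w, (∀ i, P i v w) → F P v w) :
    ∀ AF : Fin n → A → A → Prop, JustifiableProfile (V := V) AF →
      ∀ a b, (∀ i, AF i a b) → F' AF a b := by
  intro AF hJ a b hab
  obtain ⟨hAud, hEq⟩ := hS AF hJ
  rw [hF' AF hJ]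
  have hFA : IsAudience (F (Jsel AF)) := hF _ hAud
  rcases Nat.eq_zero_or_pos n with hn | hn
  · -- n = 0: unanimity is vacuous, contradicting irreflexivity of F (Jsel AF)
    exact absurd (hUnanimous (Jsel AF) hAud (Sval AF a) (Sval AF a)
      (fun i => absurd (i.2) (by omega))) (hFA.1 _)
  · have hdef : ∀ i, Satt AF a b ∧ ¬ Jsel AF i (Sval AF b) (Sval AF a) := by
      intro i
      have := hab i
      rw [hEq i] at this
      exact this
    obtain ⟨i0, _⟩ : ∃ i : Fin n, True := ⟨⟨0, hn⟩, trivial⟩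
    refine ⟨(hdef i0).1, ?_⟩
    by_cases hvv : Sval AF b = Sval AF a
    · rw [hvv]; exact hFA.1 _
    · have hforall : ∀ i, Jsel AF i (Sval AF a) (Sval AF b) := by
        intro i
        rcases (hAud i).2.2 _ _ (Ne.symm hvv) with h | h
        · exact h
        · exact absurd h (hdef i).2
      have hF1 : F (Jsel AF) (Sval AF a) (Sval AF b) :=
        hUnanimous (Jsel AF) hAud _ _ hforall
      intro hcon
      exact hFA.1 _ (hFA.2.1 _ _ _ hcon hF1)
end

section
/- If a preference aggregation rule F is independent, then the graph aggregation rule F' (restricted to justifiable profiles) corresponding to the mechanism C_F^{VAF} with fixed VAF selection S is independent: for any pair of justifiable profiles AF, AF' (justified by the same selected VAF) and any pair of arguments a, b, if N^{a→b}_{AF} = N^{a→b}_{AF'}, then a → b ∈ F'(AF) iff a → b ∈ F'(AF'). -/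
/-- if the preference aggregation rule `F` is independent, then the
graph aggregation rule `F'` corresponding to the mechanism `C_F^VAF` with fixed VAF
selection is independent: for justifiable profiles justified by the same selected
VAF, acceptance of an attack depends only on the set of agents supporting it. -/
theorem mechanism_with_fixed_vaf_preserves_independence
    (A V : Type) (n : ℕ)
    (F : (Fin n → V → V → Prop) → (V → V → Prop))
    (hF : ∀ P : Fin n → V → V → Prop, (∀ i, IsAudience (P i)) → IsAudience (F P))
    -- the VAF selection `S`: it assigns to each justifiable profile a VAF
    -- `⟨A, Satt AF, V, Sval AF⟩` justifying it, together with a selected profile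
    -- `Jsel AF` of audiences justifying the profile with respect to that VAF
    (Satt : (Fin n → A → A → Prop) → (A → A → Prop))
    (Sval : (Fin n → A → A → Prop) → (A → V))
    (Jsel : (Fin n → A → A → Prop) → (Fin n → V → V → Prop))
    (hS : ∀ AF : Fin n → A → A → Prop, JustifiableProfile (V := V) AF →
      (∀ i, IsAudience (Jsel AF i)) ∧
      (∀ i, AF i = defeats (Satt AF) (Sval AF) (Jsel AF i)))
    -- `F'` is the graph aggregation rule corresponding to the mechanism `C_F^VAF`:
    -- on justifiable profiles it outputs the defeat graph of the selected VAF
    -- induced by `F` applied to the selected justifying audiences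
    (F' : (Fin n → A → A → Prop) → (A → A → Prop))
    (hF' : ∀ AF : Fin n → A → A → Prop, JustifiableProfile (V := V) AF →
      F' AF = defeats (Satt AF) (Sval AF) (F (Jsel AF)))
    (hIndependent : ∀ P P' : Fin n → V → V → Prop,
      (∀ i, IsAudience (P i)) → (∀ i, IsAudience (P' i)) →
      ∀ v w : V, {i : Fin n | P i v w} = {i : Fin n | P' i v w} →
        (F P v w ↔ F P' v w)) :
    ∀ AF AF' : Fin n → A → A → Prop,
      JustifiableProfile (V := V) AF → JustifiableProfile (V := V) AF' →
      Satt AF = Satt AF' → Sval AF = Sval AF' →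
      ∀ a b, {i : Fin n | AF i a b} = {i : Fin n | AF' i a b} →
        (F' AF a b ↔ F' AF' a b) := by
  intro AF AF' hJ hJ' hatt hval a b hN
  obtain ⟨hAud, hEq⟩ := hS AF hJ
  obtain ⟨hAud', hEq'⟩ := hS AF' hJ'
  rw [hF' AF hJ, hF' AF' hJ']
  unfold defeats
  rw [hatt, hval]
  by_cases hA : Satt AF' a b
  · have hset : {i : Fin n | Jsel AF i (Sval AF' b) (Sval AF' a)}
        = {i : Fin n | Jsel AF' i (Sval AF' b) (Sval AF' a)} := by
      have key : ∀ i : Fin n, Jsel AF i (Sval AF' b) (Sval AF' a)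
          ↔ Jsel AF' i (Sval AF' b) (Sval AF' a) := by
        intro i
        have h1 : AF i a b ↔ AF' i a b := by
          have := Set.ext_iff.mp hN i; simpa using this
        rw [hEq i, hEq' i] at h1
        unfold defeats at h1
        rw [hatt, hval] at h1
        tauto
      ext i; exact key i
    have := hIndependent (Jsel AF) (Jsel AF') hAud hAud'
      (Sval AF' b) (Sval AF' a) hset
    tauto
  · tauto
end
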